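/- Let g be a simple finite-dimensional Lie algebra with g ≅ Out(g). Then g is taut if and only if the short exact sequence 0 → Inn(g) → Der(g) → Out(g) → 0 does not split (i.e., there is no Lie algebra homomorphism section Out(g) → Der(g)). -/
import Mathlib

/-- The quotient map by a Lie ideal, as a Lie algebra homomorphism. -/
def lieQuotMkHom {K : Type*} [CommRing K] {A : Type*} [LieRing A] [LieAlgebra K A]
    (J : LieIdeal K A) : A →ₗ⁅K⁆ A ⧸ J :=
  { (J : LieSubmodule K A A).toSubmodule.mkQ with
    toFun := LieSubmodule.Quotient.mk (N := (J : LieSubmodule K A A))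
    map_lie' := fun {_ _} => rfl }

@[simp] lemma lieQuotMkHom_apply {K : Type*} [CommRing K] {A : Type*} [LieRing A]
    [LieAlgebra K A] (J : LieIdeal K A) (a : A) :
    lieQuotMkHom J a = LieSubmodule.Quotient.mk' J a := rfl

/-- For a simple Lie algebra `g` with `g ≅ Out(g)`, `g` is taut if and only if the exact
sequence `0 → Inn(g) → Der(g) → Out(g) → 0` does not split. -/
theorem simple_out_iso_taut_iff_nonsplit
    (K : Type*) [Field K] (L : Type*) [LieRing L] [LieAlgebra K L]
    [FiniteDimensional K L] [LieAlgebra.IsSimple K L]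
    (I : LieIdeal K (LieDerivation K L L))
    (hI : ∀ D : LieDerivation K L L, D ∈ I ↔ ∃ x : L, D = LieDerivation.ad K L x)
    (e : L ≃ₗ⁅K⁆ (LieDerivation K L L ⧸ I)) :
    (∀ (φ : L →ₗ⁅K⁆ LieDerivation K L L) (x : L), φ x ∈ I) ↔
      ¬ ∃ s : (LieDerivation K L L ⧸ I) →ₗ⁅K⁆ LieDerivation K L L,
          ∀ d : LieDerivation K L L ⧸ I, LieSubmodule.Quotient.mk' I (s d) = d := by
  constructor
  · rintro taut ⟨s, hs⟩
    -- compose s with e to get a Lie hom L → Der; tautness forces e = 0, contradiction.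
    have h : ∀ x : L, (s.comp e.toLieHom) x ∈ I := taut _
    have hL : ∀ x : L, e x = 0 := by
      intro x
      have := hs (e x)
      have h0 : LieSubmodule.Quotient.mk' I (s (e x)) = 0 :=
        (LieSubmodule.Quotient.mk_eq_zero I).2 (h x)
      rw [this] at h0
      exact h0
    have : IsLieAbelian L := by
      constructor
      intro x y
      have := hL x
      have hx : x = 0 := e.toLinearEquiv.map_eq_zero_iff.mp this
      simp [hx]
    exact LieAlgebra.IsSimple.non_abelian (R := K) this
  · intro hns φ x
    by_contra hx
    apply hns
    -- ψ := mk' ∘ φ : L →ₗ⁅K⁆ Der/I is nonzero, hence injective (L simple), hence bijective.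
    set ψ : L →ₗ⁅K⁆ (LieDerivation K L L ⧸ I) := (lieQuotMkHom I).comp φ with hψ
    have hker : ψ.ker = ⊥ := by
      rcases LieAlgebra.IsSimple.eq_bot_or_eq_top (R := K) ψ.ker with h | h
      · exact h
      · exfalso
        apply hx
        have hxk : x ∈ ψ.ker := h ▸ LieSubmodule.mem_top x
        have : ψ x = 0 := LieHom.mem_ker.mp hxk
        have : LieSubmodule.Quotient.mk' I (φ x) = 0 := this
        exact (LieSubmodule.Quotient.mk_eq_zero I).1 this
    have hinj : Function.Injective ψ := (LieHom.ker_eq_bot ψ).mp hker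
    -- finite-dimensionality: target has same finrank as L via e
    have hfd : FiniteDimensional K (LieDerivation K L L ⧸ I) :=
      Module.Finite.equiv e.toLinearEquiv
    have hrank : Module.finrank K L = Module.finrank K (LieDerivation K L L ⧸ I) :=
      e.toLinearEquiv.finrank_eq
    have hsurj : Function.Surjective ψ :=
      (LinearMap.injective_iff_surjective_of_finrank_eq_finrank (f := (ψ : L →ₗ[K] _)) hrank).1 hinj
    have hbij : Function.Bijective ψ := ⟨hinj, hsurj⟩
    let E := LieEquiv.ofBijective ψ hbij
    refine ⟨φ.comp E.symm.toLieHom, ?_⟩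
    intro d
    have : ψ (E.symm d) = d := E.apply_symm_apply d
    simpa [ψ, LieHom.comp_apply] using this
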